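/- For every n ≥ 5 with n ≡ 2 (mod 3), the decycling number of the square of the n-cycle equals (n+1)/3 + 1: ∇(Cₙ²) = ⌈(n+1)/3⌉ + 1. -/

import Mathlib

open SimpleGraph

/-- `S` is a decycling set of `G` if the subgraph of `G` induced on the complement of `S`
is acyclic. -/
def SimpleGraph.IsDecyclingSet {V : Type*} (G : SimpleGraph V) (S : Set V) : Prop :=
  (G.induce Sᶜ).IsAcyclic

/-- The decycling number `∇(G)` of `G`: the minimum cardinality of a decycling set of `G`. -/
noncomputable def SimpleGraph.decyclingNumber {V : Type*} (G : SimpleGraph V) : ℕ :=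
  sInf {k | ∃ S : Set V, G.IsDecyclingSet S ∧ S.ncard = k}

/-- The square `Cₙ²` of the `n`-cycle: vertex set `ZMod n`, with `i` adjacent to `j` iff
`i ≠ j` and `i - j ≡ ±1` or `±2 (mod n)`. -/
def cycleSquare (n : ℕ) : SimpleGraph (ZMod n) where
  Adj i j := i ≠ j ∧ (i - j = 1 ∨ j - i = 1 ∨ i - j = 2 ∨ j - i = 2)
  symm := ⟨by intro i j ⟨h, hd⟩; exact ⟨h.symm, by tauto⟩⟩
  loopless := ⟨by intro i ⟨h, _⟩; exact h rfl⟩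

namespace DecyclingAux

open Finset SimpleGraph.Walk

lemma acyclic_of_injective_hom {V W : Type*} {G : SimpleGraph V} {H : SimpleGraph W}
    (f : G →g H) (hinj : Function.Injective f) (hH : H.IsAcyclic) : G.IsAcyclic :=
  fun _ c hc => hH (c.map f) (hc.map hinj)

def pathNat : SimpleGraph ℕ where
  Adj a b := b = a + 1 ∨ a = b + 1
  symm := ⟨by intro a b h; tauto⟩
  loopless := ⟨by intro a h; omega⟩

lemma pathNat_isAcyclic : pathNat.IsAcyclic := by
  rw [isAcyclic_iff_forall_adj_isBridge]
  intro v w hvw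
  wlog h : w = v + 1 generalizing v w
  · rw [Sym2.eq_swap]
    exact (this hvw.symm (by cases hvw with
      | inl h' => exact absurd h' h
      | inr h' => exact h'))
  subst h
  rw [isBridge_iff]
  refine ?_
  intro hreach
  have key : ∀ (x y : ℕ) (_ : (pathNat \ fromEdgeSet {s(v, v+1)}).Walk x y), x ≤ v → y ≤ v := by
    intro x y p
    induction p with
    | nil => exact id
    | @cons a b c h p ih =>
      intro ha
      apply ih
      rw [SimpleGraph.sdiff_adj, fromEdgeSet_adj] at h
      obtain ⟨hadj, hne⟩ := h
      rcases hadj with h1 | h1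
      · by_contra hb
        have : a = v ∧ b = v + 1 := by omega
        exact hne ⟨by rw [this.1, this.2]; simp, by omega⟩
      · omega
  obtain ⟨p⟩ := hreach
  have := key v (v+1) p le_rfl
  omega

lemma isAcyclic_card_edgeFinset_add_one_le {V : Type*} [Fintype V] [Nonempty V]
    {G : SimpleGraph V} [Fintype G.edgeSet] (hG : G.IsAcyclic) :
    G.edgeFinset.card + 1 ≤ Fintype.card V := by
  classical
  set root : V → V := fun v => (G.connectedComponentMk v).out with hrootdef
  have hreach : ∀ v, G.Reachable v (root v) := fun v =>
    (ConnectedComponent.exact (Quot.out_eq _)).symm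
  have hadjroot : ∀ {a b : V}, G.Adj a b → root a = root b := by
    intro a b hab
    simp only [hrootdef]
    rw [ConnectedComponent.connectedComponentMk_eq_of_adj hab]
  have exu : ∀ v, ∃! p : G.Walk v (root v), p.IsPath := by
    intro v
    obtain ⟨w⟩ := hreach v
    exact ⟨(w.toPath : G.Path v (root v)).1, (w.toPath).2,
      fun q hq => congrArg Subtype.val (hG.path_unique ⟨q, hq⟩ w.toPath)⟩
  choose f hf hf' using exu
  have key : (Finset.univ.filter (fun w => w ≠ root w)).card = G.edgeFinset.card := by
    refine Finset.card_bij
      (fun w hw => ((f w).firstDart <| not_nil_of_ne (by simpa using hw)).edge)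
      (fun a ha => ?memEdges) ?inj ?surj
    case memEdges => simp
    case inj =>
      intro a ha b hb h
      wlog h' : (f a).length ≤ (f b).length generalizing a b
      · exact Eq.symm (this _ hb _ ha h.symm (le_of_not_ge h'))
      rw [dart_edge_eq_iff] at h
      obtain (h | h) := h
      · exact congrArg (·.fst) h
      · have h1 : ((f a).firstDart <| not_nil_of_ne (by simpa using ha)).snd = b :=
          congrArg (·.snd) h
        have hab : G.Adj a b := by
          have := ((f a).firstDart <| not_nil_of_ne (by simpa using ha)).adj
          rwa [h1] at this
        have hre : root a = root b := hadjroot hab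
        have h3 := congrArg Walk.length (hf' b (((f a).tail).copy h1 hre) ?_)
        · rw [Walk.length_copy (f a).tail h1 hre, ← add_left_inj 1,
            length_tail_add_one (not_nil_of_ne (by simpa using ha))] at h3
          omega
        · simp only [Walk.isPath_copy]
          exact (Walk.isPath_copy (p := (f a).tail) (hu := h1) (hv := hre)).mpr (hf _).tail
    case surj =>
      simp only [mem_edgeFinset, Finset.mem_filter, Finset.mem_univ, Sym2.forall, SimpleGraph.mem_edgeSet]
      intro x y h
      wlog h' : (f x).length ≤ (f y).length generalizing x y
      · rw [Sym2.eq_swap]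
        exact this y x h.symm (le_of_not_ge h')
      have hrxy : root x = root y := hadjroot h
      have hy : y ≠ root y := by
        rintro hy
        have h0 := hf' y ((Walk.nil : G.Walk y y).copy rfl hy) (by simp)
        have hlen : (f y).length = 0 := by rw [← h0]; simp
        have hx0 : (f x).length = 0 := by omega
        have : x = root x := Walk.eq_of_length_eq_zero hx0
        exact h.ne (this.trans (hrxy.trans hy.symm))
      refine ⟨y, ⟨by simp, hy⟩, ?_⟩
      have hns : y ∉ (f x).support := by
        intro hy'
        have htake : (f x).takeUntil y hy' = Walk.cons h Walk.nil :=
          congrArg Subtype.val (hG.path_unique ⟨(f x).takeUntil y hy', (hf x).takeUntil hy'⟩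
            ⟨Walk.cons h Walk.nil, by simp [h.ne]⟩)
        have hdrop : ((f x).dropUntil y hy').copy rfl hrxy = f y :=
          hf' y _ (by simpa using (hf x).dropUntil hy')
        have hspec := congrArg Walk.length ((f x).take_spec hy')
        rw [Walk.length_append, htake] at hspec
        have : ((f x).dropUntil y hy').length = (f y).length := by
          rw [← hdrop]; simp
        simp at hspec
        omega
      have hfy : f y = (Walk.cons h.symm (f x)).copy rfl hrxy :=
        (hf' y _ (by simpa using ⟨hf x, hns⟩)).symm
      rw [hfy]
      simp only [Walk.copy_cons]
      rw [Walk.edge_firstDart]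
      simp [Sym2.eq_swap]
  have hroot2 : ∀ v, root (root v) = root v := by
    intro v
    have hmk : G.connectedComponentMk (Quot.out (G.connectedComponentMk v))
        = G.connectedComponentMk v := Quot.out_eq _
    simp only [hrootdef]
    rw [hmk]
  set R := root (Classical.arbitrary V) with hRdef
  have hR : R ∉ Finset.univ.filter (fun w => w ≠ root w) := by
    simp only [Finset.mem_filter, Finset.mem_univ, true_and, not_not]
    exact (hroot2 _).symm
  have hsub : Finset.univ.filter (fun w => w ≠ root w) ⊆ Finset.univ.erase R :=
    fun w hw => Finset.mem_erase.mpr ⟨fun hwR => (by simp at hw; exact hw (hwR ▸ (hroot2 _).symm)), Finset.mem_univ w⟩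
  have hcard := Finset.card_le_card hsub
  rw [Finset.card_erase_of_mem (Finset.mem_univ R)] at hcard
  have hpos : 0 < Fintype.card V := Fintype.card_pos
  rw [key, Finset.card_univ] at hcard
  omega

lemma card_edgeFinset_induce {V : Type*} (G : SimpleGraph V) (s : Set V)
    [Fintype (G.induce s).edgeSet] [Fintype G.edgeSet]
    [DecidablePred (fun e : Sym2 V => ∀ v ∈ e, v ∈ s)] :
    ((G.induce s).edgeFinset).card = (G.edgeFinset.filter (fun e => ∀ v ∈ e, v ∈ s)).card := by
  classical
  refine Finset.card_bij (fun e _ => Sym2.map Subtype.val e) ?_ ?_ ?_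
  · intro e he
    induction e with
    | _ a b =>
      rw [mem_edgeFinset, SimpleGraph.mem_edgeSet] at he
      simp only [Finset.mem_filter, mem_edgeFinset, Sym2.map_pair_eq, SimpleGraph.mem_edgeSet]
      refine ⟨he, ?_⟩
      intro v hv
      rw [Sym2.mem_iff] at hv
      rcases hv with rfl | rfl
      · exact a.2
      · exact b.2
  · intro e₁ _ e₂ _ h
    exact Sym2.map.injective Subtype.val_injective h
  · intro e he
    simp only [Finset.mem_filter, mem_edgeFinset, SimpleGraph.mem_edgeSet] at he
    obtain ⟨hadj, hmem⟩ := he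
    induction e with
    | _ a b =>
      have ha : a ∈ s := hmem a (Sym2.mem_mk_left a b)
      have hb : b ∈ s := hmem b (Sym2.mem_mk_right a b)
      refine ⟨s(⟨a, ha⟩, ⟨b, hb⟩), ?_, by simp⟩
      rw [mem_edgeFinset, SimpleGraph.mem_edgeSet]
      exact hadj

lemma sum_degree_filter_eq {V : Type*} [Fintype V] [DecidableEq V] (G : SimpleGraph V)
    [Fintype G.edgeSet] [DecidableRel G.Adj] (S : Finset V) :
    ∑ v ∈ S, G.degree v = ∑ e ∈ G.edgeFinset, (S.filter (fun v => v ∈ e)).card := by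
  have h1 : ∀ v, G.degree v = (G.edgeFinset.filter (fun e => v ∈ e)).card := by
    intro v
    rw [← card_incidenceFinset_eq_degree, incidenceFinset_eq_filter]
  simp_rw [h1, Finset.card_filter]
  rw [Finset.sum_comm]

section cyc
variable {n : ℕ} (hn : 5 ≤ n)
include hn

lemma natCast_zmod_ne_zero {k : ℕ} (h1 : 1 ≤ k) (h2 : k < n) : ((k : ℕ) : ZMod n) ≠ 0 := by
  haveI : NeZero n := ⟨by omega⟩
  intro h
  have := ZMod.val_cast_of_lt h2
  rw [h] at this
  simp [ZMod.val_zero] at this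
  omega

lemma sub_ne_of_diff (a b : ZMod n) {k : ℕ} (h1 : 1 ≤ k) (h2 : k < n) (h : a - b = (k : ZMod n)) :
    a ≠ b := by
  intro rfl'
  subst rfl'
  rw [sub_self] at h
  exact natCast_zmod_ne_zero hn h1 h2 h.symm

lemma cycleSquare_adj_iff (v w : ZMod n) :
    (cycleSquare n).Adj v w ↔ (w = v + 1 ∨ w = v - 1 ∨ w = v + 2 ∨ w = v - 2) := by
  have hsub : ∀ a b c : ZMod n, a - b = c ↔ b = a - c :=
    fun a b c => ⟨fun h => by rw [← h]; ring, fun h => by rw [h]; ring⟩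
  constructor
  · rintro ⟨hne, h⟩
    rcases h with h | h | h | h
    · right; left; exact (hsub v w 1).mp h
    · left; rw [(hsub w v 1).mp h]; ring
    · right; right; right; exact (hsub v w 2).mp h
    · right; right; left; rw [(hsub w v 2).mp h]; ring
  · intro h
    have c1 : (1:ℕ) < n := by omega
    have c2 : (2:ℕ) < n := by omega
    rcases h with rfl | rfl | rfl | rfl
    · exact ⟨(sub_ne_of_diff hn _ _ le_rfl c1 (by push_cast; ring)).symm,
        by right; left; push_cast; ring⟩
    · exact ⟨(sub_ne_of_diff hn _ _ le_rfl c1 (by push_cast; ring)),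
        by left; push_cast; ring⟩
    · exact ⟨(sub_ne_of_diff hn _ _ (by norm_num) c2 (by push_cast; ring)).symm,
        by right; right; right; push_cast; ring⟩
    · exact ⟨(sub_ne_of_diff hn _ _ (by norm_num) c2 (by push_cast; ring)),
        by right; right; left; push_cast; ring⟩

lemma cycleSquare_degree [NeZero n] (v : ZMod n) [DecidableRel (cycleSquare n).Adj]
    [DecidableEq (ZMod n)] :
    (cycleSquare n).degree v = 4 := by
  have hset : (cycleSquare n).neighborFinset v = {v + 1, v - 1, v + 2, v - 2} := by
    ext w
    rw [mem_neighborFinset, cycleSquare_adj_iff hn]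
    simp [or_assoc]
  rw [← card_neighborFinset_eq_degree, hset]
  have hd : ∀ (a b : ZMod n) (k : ℕ), 1 ≤ k → k < n → a - b = (k : ZMod n) → a ≠ b :=
    fun a b k h1 h2 h => sub_ne_of_diff hn a b h1 h2 h
  have h2n : (2:ℕ) < n := by omega
  have h3n : (3:ℕ) < n := by omega
  have h4n : (4:ℕ) < n := by omega
  have h1n : (1:ℕ) < n := by omega
  have d12 : v + 1 ≠ v - 1 := hd _ _ 2 (by norm_num) h2n (by push_cast; ring)
  have d13 : v + 1 ≠ v + 2 := (hd _ _ 1 le_rfl h1n (by push_cast; ring)).symm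
  have d14 : v + 1 ≠ v - 2 := hd _ _ 3 (by norm_num) h3n (by push_cast; ring)
  have d23 : v - 1 ≠ v + 2 := (hd _ _ 3 (by norm_num) h3n (by push_cast; ring)).symm
  have d24 : v - 1 ≠ v - 2 := hd _ _ 1 le_rfl h1n (by push_cast; ring)
  have d34 : v + 2 ≠ v - 2 := hd _ _ 4 (by norm_num) h4n (by push_cast; ring)
  rw [Finset.card_insert_of_notMem (by simp [d12, d13, d14]),
      Finset.card_insert_of_notMem (by simp [d23, d24]),
      Finset.card_insert_of_notMem (by simp [d34])]
  simp

lemma cycleSquare_card_edges [NeZero n] [DecidableRel (cycleSquare n).Adj]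
    [DecidableEq (ZMod n)] [Fintype (cycleSquare n).edgeSet] :
    (cycleSquare n).edgeFinset.card = 2 * n := by
  have h := sum_degrees_eq_twice_card_edges (cycleSquare n)
  have h4 : ∑ v : ZMod n, (cycleSquare n).degree v = 4 * n := by
    rw [Finset.sum_congr rfl (fun v _ => cycleSquare_degree hn v)]
    simp [ZMod.card]
    ring
  rw [h4] at h
  rw [show (4:ℕ)*n = 2*(2*n) by ring] at h
  have h6 := (Nat.eq_of_mul_eq_mul_left (by norm_num : 0 < 2) h).symm
  have hind : ∀ (i1 i2 : Fintype (cycleSquare n).edgeSet),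
      (@SimpleGraph.edgeFinset _ (cycleSquare n) i1).card
        = (@SimpleGraph.edgeFinset _ (cycleSquare n) i2).card := by
    intro i1 i2
    have a1 : (@SimpleGraph.edgeFinset _ (cycleSquare n) i1).card
        = @Fintype.card _ i1 := @Set.toFinset_card _ _ i1
    have a2 : (@SimpleGraph.edgeFinset _ (cycleSquare n) i2).card
        = @Fintype.card _ i2 := @Set.toFinset_card _ _ i2
    exact a1.trans ((@Fintype.card_congr' _ _ i1 i2 rfl).trans a2.symm)
  exact (hind _ _).trans h6

lemma val_add_one_cases (v : ZMod n) :
    (v + 1).val = v.val + 1 ∨ (v.val = n - 1 ∧ (v + 1).val = 0) := by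
  haveI : NeZero n := ⟨by omega⟩
  have h1 : (1 : ZMod n).val = 1 := by
    have := ZMod.val_cast_of_lt (show 1 < n by omega)
    rwa [Nat.cast_one] at this
  have h := ZMod.val_add v 1
  rw [h1] at h
  have hv : v.val < n := ZMod.val_lt v
  rcases Nat.lt_or_ge (v.val + 1) n with hlt | hge
  · left; rw [h, Nat.mod_eq_of_lt hlt]
  · right
    have hvn : v.val + 1 = n := by omega
    exact ⟨by omega, by rw [h, hvn, Nat.mod_self]⟩

lemma val_add_two_cases (v : ZMod n) :
    (v + 2).val = v.val + 2 ∨ (v.val = n - 2 ∧ (v + 2).val = 0)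
      ∨ (v.val = n - 1 ∧ (v + 2).val = 1) := by
  haveI : NeZero n := ⟨by omega⟩
  have h2 : (2 : ZMod n).val = 2 := by
    have := ZMod.val_cast_of_lt (show 2 < n by omega)
    rwa [Nat.cast_two] at this
  have h := ZMod.val_add v 2
  rw [h2] at h
  have hv : v.val < n := ZMod.val_lt v
  rcases Nat.lt_or_ge (v.val + 2) n with hlt | hge
  · left; rw [h, Nat.mod_eq_of_lt hlt]
  · rcases Nat.lt_or_ge (v.val + 1) n with hlt1 | hge1
    · right; left
      have hvn : v.val + 2 = n := by omega
      exact ⟨by omega, by rw [h, hvn, Nat.mod_self]⟩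
    · right; right
      have hvn : v.val + 1 = n := by omega
      refine ⟨by omega, ?_⟩
      rw [h, show v.val + 2 = n + 1 by omega, Nat.add_mod_left, Nat.mod_eq_of_lt (by omega)]

end cyc

def upperSet (n : ℕ) : Set (ZMod n) := {x | x.val % 3 = 0 ∨ x.val = n - 1}

section upper
variable {n m : ℕ} (hn : 5 ≤ n) (hm : n = 3 * m + 2)
include hn hm

lemma upperSet_decycling : (cycleSquare n).IsDecyclingSet (upperSet n) := by
  haveI : NeZero n := ⟨by omega⟩
  set T : Set (ZMod n) := (upperSet n)ᶜ with hT
  have hmemT : ∀ x : ZMod n, x ∈ T ↔ (x.val % 3 ≠ 0 ∧ x.val ≠ n - 1) := by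
    intro x
    simp [hT, upperSet, not_or]
  set g : ↥T → ℕ := fun x => 2 * (x.1.val / 3) + x.1.val % 3 - 1 with hg
  have hadj : ∀ x y : ↥T, ((cycleSquare n).induce T).Adj x y → pathNat.Adj (g x) (g y) := by
    rintro x y hxy
    have hx := (hmemT x.1).mp x.2
    have hy := (hmemT y.1).mp y.2
    have hxlt : x.1.val < n := ZMod.val_lt _
    have hylt : y.1.val < n := ZMod.val_lt _
    have hadj' : (cycleSquare n).Adj x.1 y.1 := hxy
    rw [cycleSquare_adj_iff hn] at hadj'
    show g y = g x + 1 ∨ g x = g y + 1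
    simp only [hg]
    rcases hadj' with h | h | h | h
    · have hb : (y.1 : ZMod n).val = (x.1 : ZMod n).val + 1 := by
        rcases val_add_one_cases hn x.1 with hc | hc
        · rw [h]; exact hc
        · exact absurd hc.1 hx.2
      omega
    · have h' : x.1 = y.1 + 1 := by rw [h]; ring
      have hb : (x.1 : ZMod n).val = (y.1 : ZMod n).val + 1 := by
        rcases val_add_one_cases hn y.1 with hc | hc
        · rw [h']; exact hc
        · exact absurd hc.1 hy.2
      omega
    · have hb : (y.1 : ZMod n).val = (x.1 : ZMod n).val + 2 := by
        rcases val_add_two_cases hn x.1 with hc | hc | hc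
        · rw [h]; exact hc
        · exact absurd (by omega : (x.1 : ZMod n).val % 3 = 0) hx.1
        · exact absurd hc.1 hx.2
      omega
    · have h' : x.1 = y.1 + 2 := by rw [h]; ring
      have hb : (x.1 : ZMod n).val = (y.1 : ZMod n).val + 2 := by
        rcases val_add_two_cases hn y.1 with hc | hc | hc
        · rw [h']; exact hc
        · exact absurd (by omega : (y.1 : ZMod n).val % 3 = 0) hy.1
        · exact absurd hc.1 hy.2
      omega
  have hinj : Function.Injective g := by
    intro x y hxy
    have hx := (hmemT x.1).mp x.2
    have hy := (hmemT y.1).mp y.2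
    have : x.1.val = y.1.val := by
      simp only [hg] at hxy
      omega
    exact Subtype.ext (ZMod.val_injective n this)
  exact acyclic_of_injective_hom ⟨g, fun {a b} h => hadj a b h⟩ hinj pathNat_isAcyclic

lemma upperSet_ncard : (upperSet n).ncard = m + 2 := by
  haveI : NeZero n := ⟨by omega⟩
  classical
  have hfin : (upperSet n).toFinset
      = ((Finset.range n).filter (fun i => i % 3 = 0 ∨ i = n - 1)).image
          (Nat.cast : ℕ → ZMod n) := by
    ext x
    simp only [Set.mem_toFinset, Finset.mem_image, Finset.mem_filter, Finset.mem_range]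
    constructor
    · intro hx
      exact ⟨x.val, ⟨ZMod.val_lt x, hx⟩, ZMod.natCast_rightInverse x⟩
    · rintro ⟨i, ⟨hi, hcond⟩, rfl⟩
      show (i : ZMod n).val % 3 = 0 ∨ (i : ZMod n).val = n - 1
      rw [ZMod.val_cast_of_lt hi]
      exact hcond
  rw [Set.ncard_eq_toFinset_card', hfin]
  rw [Finset.card_image_of_injOn]
  · have : (Finset.range n).filter (fun i => i % 3 = 0 ∨ i = n - 1)
        = ((Finset.range (m+1)).image (fun j => 3 * j)) ∪ {n - 1} := by
      ext i
      simp only [Finset.mem_filter, Finset.mem_range, Finset.mem_union, Finset.mem_image,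
        Finset.mem_singleton]
      constructor
      · rintro ⟨hi, h | h⟩
        · exact Or.inl ⟨i / 3, by omega, by omega⟩
        · exact Or.inr h
      · rintro (⟨j, hj, rfl⟩ | rfl)
        · constructor
          · omega
          · left; omega
        · exact ⟨by omega, Or.inr rfl⟩
    rw [this]
    rw [Finset.card_union_of_disjoint]
    · rw [Finset.card_image_of_injective _ (fun a b h => by omega)]
      simp
    · simp only [Finset.disjoint_singleton_right, Finset.mem_image, Finset.mem_range]
      rintro ⟨j, hj, hje⟩
      omega
  · intro a ha b hb hab
    simp only [Finset.coe_filter, Set.mem_setOf_eq, Finset.mem_range] at ha hb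
    have := congrArg ZMod.val hab
    rwa [ZMod.val_cast_of_lt ha.1, ZMod.val_cast_of_lt hb.1] at this

end upper

end DecyclingAux

/-- For every `n ≥ 5` with `n ≡ 2 (mod 3)`, `∇(Cₙ²) = (n+1)/3 + 1 = ⌈(n+1)/3⌉ + 1`. -/
theorem decyclingNumber_cycleSquare_two_mod_three (n : ℕ) (hn : 5 ≤ n) (h3 : n % 3 = 2) :
    (cycleSquare n).decyclingNumber = ⌈((n : ℚ) + 1) / 3⌉₊ + 1 := by
  classical
  haveI : NeZero n := ⟨by omega⟩
  obtain ⟨m, hm⟩ : ∃ m, n = 3 * m + 2 := ⟨n / 3, by omega⟩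
  have hm1 : 1 ≤ m := by omega
  have hrhs : ⌈((n : ℚ) + 1) / 3⌉₊ + 1 = m + 2 := by
    have hq : ((n : ℚ) + 1) / 3 = ((m + 1 : ℕ) : ℚ) := by
      subst hm; push_cast; ring
    rw [hq, Nat.ceil_natCast]
  rw [hrhs]
  have hmem : (m + 2) ∈ {k | ∃ S : Set (ZMod n),
      (cycleSquare n).IsDecyclingSet S ∧ S.ncard = k} :=
    ⟨DecyclingAux.upperSet n, DecyclingAux.upperSet_decycling hn hm,
      DecyclingAux.upperSet_ncard hn hm⟩
  have hlb : ∀ k ∈ {k | ∃ S : Set (ZMod n),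
      (cycleSquare n).IsDecyclingSet S ∧ S.ncard = k}, m + 2 ≤ k := by
    rintro k ⟨S, hS, hcard⟩
    by_contra hlt
    push_neg at hlt
    have hk1 : k ≤ m + 1 := by omega
    set G := cycleSquare n with hG
    set Sf := S.toFinset with hSf
    have hk : Sf.card = k := by rw [← hcard, Set.ncard_eq_toFinset_card']
    haveI : Fintype ↥(Sᶜ) := Fintype.ofFinite _
    haveI hfe1 : Fintype (G.induce Sᶜ).edgeSet := Fintype.ofFinite _
    haveI hfe2 : Fintype G.edgeSet := Fintype.ofFinite _
    have hcompl : Fintype.card ↥(Sᶜ) = n - k := by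
      rw [← Set.toFinset_card, Set.toFinset_compl, Finset.card_compl, hk]
      congr 1
      rw [Fintype.card_eq_nat_card, Nat.card_zmod]
    haveI : Nonempty ↥(Sᶜ) := by
      rw [← Fintype.card_pos_iff, hcompl]; omega
    have hacyc : (G.induce Sᶜ).IsAcyclic := hS
    have hA := DecyclingAux.isAcyclic_card_edgeFinset_add_one_le hacyc
    rw [hcompl] at hA
    have hT := DecyclingAux.card_edgeFinset_induce G Sᶜ
    have hsplit := Finset.card_filter_add_card_filter_not
      (s := G.edgeFinset) (p := fun e => ∀ v ∈ e, v ∈ Sᶜ)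
    have htot : G.edgeFinset.card = 2 * n := DecyclingAux.cycleSquare_card_edges hn
    have hdeg : ∑ v ∈ Sf, G.degree v = 4 * k := by
      rw [Finset.sum_congr rfl (fun v _ => DecyclingAux.cycleSquare_degree hn v),
        Finset.sum_const, hk, smul_eq_mul]
      ring
    have hsum := DecyclingAux.sum_degree_filter_eq G Sf
    set AT := G.edgeFinset.filter (fun e => ∀ v ∈ e, v ∈ Sᶜ) with hAT
    set Ameet := G.edgeFinset.filter (fun e => ¬ ∀ v ∈ e, v ∈ Sᶜ) with hAmeet
    set ASS := G.edgeFinset.filter (fun e => ∀ v ∈ e, v ∈ S) with hASS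
    have hsubm : ASS ⊆ Ameet := by
      intro e he
      rw [hASS, Finset.mem_filter] at he
      rw [hAmeet, Finset.mem_filter]
      refine ⟨he.1, ?_⟩
      intro hall
      induction e with
      | _ a b =>
        exact (hall a (Sym2.mem_mk_left a b)) (he.2 a (Sym2.mem_mk_left a b))
    have h1 : ∀ e ∈ Ameet, 1 ≤ (Sf.filter (fun v => v ∈ e)).card := by
      intro e he
      rw [hAmeet, Finset.mem_filter] at he
      push_neg at he
      obtain ⟨v, hv, hvS⟩ := he.2
      rw [Set.notMem_compl_iff] at hvS
      refine Finset.card_pos.mpr ⟨v, Finset.mem_filter.mpr ⟨Set.mem_toFinset.mpr hvS, hv⟩⟩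
    have h2 : ∀ e ∈ ASS, 2 ≤ (Sf.filter (fun v => v ∈ e)).card := by
      intro e he
      rw [hASS, Finset.mem_filter] at he
      induction e with
      | _ a b =>
        have hadj : G.Adj a b := by
          rw [← SimpleGraph.mem_edgeSet, ← SimpleGraph.mem_edgeFinset]
          exact he.1
        have hab : a ≠ b := hadj.ne
        have hsub2 : ({a, b} : Finset (ZMod n)) ⊆ Sf.filter (fun v => v ∈ s(a, b)) := by
          intro z hz
          rcases Finset.mem_insert.mp hz with rfl | hz
          · exact Finset.mem_filter.mpr ⟨Set.mem_toFinset.mpr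
              (he.2 z (Sym2.mem_mk_left _ _)), Sym2.mem_mk_left _ _⟩
          · rw [Finset.mem_singleton] at hz
            subst hz
            exact Finset.mem_filter.mpr ⟨Set.mem_toFinset.mpr
              (he.2 z (Sym2.mem_mk_right _ _)), Sym2.mem_mk_right _ _⟩
        calc 2 = ({a, b} : Finset (ZMod n)).card := (Finset.card_pair hab).symm
          _ ≤ _ := Finset.card_le_card hsub2
    have e1 : ∑ e ∈ Ameet, (Sf.filter (fun v => v ∈ e)).card
        ≤ ∑ e ∈ G.edgeFinset, (Sf.filter (fun v => v ∈ e)).card :=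
      Finset.sum_le_sum_of_subset (Finset.filter_subset _ _)
    have e2 : ASS.card * 2 ≤ ∑ e ∈ ASS, (Sf.filter (fun v => v ∈ e)).card := by
      simpa using Finset.card_nsmul_le_sum ASS _ 2 h2
    have e3 : (Ameet \ ASS).card ≤ ∑ e ∈ Ameet \ ASS, (Sf.filter (fun v => v ∈ e)).card := by
      simpa using Finset.card_nsmul_le_sum (Ameet \ ASS) _ 1
        (fun e he => h1 e (Finset.mem_sdiff.mp he).1)
    have e4 : ∑ e ∈ Ameet \ ASS, (Sf.filter (fun v => v ∈ e)).card
        + ∑ e ∈ ASS, (Sf.filter (fun v => v ∈ e)).card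
        = ∑ e ∈ Ameet, (Sf.filter (fun v => v ∈ e)).card := Finset.sum_sdiff hsubm
    have e5 : (Ameet \ ASS).card = Ameet.card - ASS.card := Finset.card_sdiff_of_subset hsubm
    have e6 : ASS.card ≤ Ameet.card := Finset.card_le_card hsubm
    -- conclude ASS.card = 0 and k = m + 1
    have hzero : ASS.card = 0 ∧ k = m + 1 := by omega
    -- independence
    have hind : ∀ a b : ZMod n, a ∈ S → b ∈ S → ¬ G.Adj a b := by
      intro a b ha hb hadj
      have hmm : s(a, b) ∈ ASS := by
        rw [hASS, Finset.mem_filter]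
        refine ⟨SimpleGraph.mem_edgeFinset.mpr hadj, ?_⟩
        intro v hv
        rcases Sym2.mem_iff.mp hv with rfl | rfl
        · exact ha
        · exact hb
      rw [Finset.card_eq_zero] at hzero
      rw [hzero.1] at hmm
      exact absurd hmm (Finset.notMem_empty _)
    have hone : (1 : ZMod n) ≠ 0 := by
      have := DecyclingAux.natCast_zmod_ne_zero hn (le_refl 1) (by omega : 1 < n)
      rwa [Nat.cast_one] at this
    have htwo : (2 : ZMod n) ≠ 0 := by
      have := DecyclingAux.natCast_zmod_ne_zero hn (by norm_num : 1 ≤ 2) (by omega : 2 < n)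
      rwa [Nat.cast_two] at this
    set P1 := Sf.image (fun x => x + (1 : ZMod n)) with hP1
    set P2 := Sf.image (fun x => x + (2 : ZMod n)) with hP2
    have hc1 : P1.card = k := by
      rw [hP1, Finset.card_image_of_injective _ (add_left_injective 1), hk]
    have hc2 : P2.card = k := by
      rw [hP2, Finset.card_image_of_injective _ (add_left_injective 2), hk]
    have d01 : Disjoint Sf P1 := by
      rw [Finset.disjoint_left]
      intro x hx hx1
      obtain ⟨s, hs, rfl⟩ := Finset.mem_image.mp hx1
      refine hind _ _ (Set.mem_toFinset.mp hx) (Set.mem_toFinset.mp hs) ?_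
      refine ⟨fun h => hone (by linear_combination h), Or.inl (by ring)⟩
    have d02 : Disjoint Sf P2 := by
      rw [Finset.disjoint_left]
      intro x hx hx2
      obtain ⟨s, hs, rfl⟩ := Finset.mem_image.mp hx2
      refine hind _ _ (Set.mem_toFinset.mp hx) (Set.mem_toFinset.mp hs) ?_
      refine ⟨fun h => htwo (by linear_combination h), Or.inr (Or.inr (Or.inl (by ring)))⟩
    have d12 : Disjoint P1 P2 := by
      rw [Finset.disjoint_left]
      intro x hx1 hx2
      obtain ⟨s, hs, rfl⟩ := Finset.mem_image.mp hx1
      obtain ⟨t, ht, hts⟩ := Finset.mem_image.mp hx2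
      have hst : s = t + 1 := by linear_combination -hts
      refine hind _ _ (Set.mem_toFinset.mp hs) (Set.mem_toFinset.mp ht) ?_
      refine ⟨fun h => hone (by linear_combination hst.symm.trans h), Or.inl (by rw [hst]; ring)⟩
    have hunion : (Sf ∪ P1 ∪ P2).card = 3 * k := by
      rw [Finset.card_union_of_disjoint (Finset.disjoint_union_left.mpr ⟨d02, d12⟩),
        Finset.card_union_of_disjoint d01, hk, hc1, hc2]
      ring
    have hle : (Sf ∪ P1 ∪ P2).card ≤ n := by
      have := Finset.card_le_univ (Sf ∪ P1 ∪ P2)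
      rwa [Fintype.card_eq_nat_card, Nat.card_zmod] at this
    omega
  exact le_antisymm (Nat.sInf_le hmem) (le_csInf ⟨_, hmem⟩ hlb)
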